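/- Symmetric Lagrangian and its parameter derivative for Q1 with δ=1: Define L(X,U;α) = (X−U+α)·log|X−U+α| − (X−U−α)·log|X−U−α| for real X, U, α with X−U+α ≠ 0 and X−U−α ≠ 0. Then: (i) L is symmetric, L(X,U;α) = L(U,X;α); (ii) ∂L/∂X = log|(X−U+α)/(X−U−α)|, which is the leg function ψ(X,U;α) of (Q1)_{δ=1}; and (iii) for α ≠ 0, ∂L/∂α = log|h(X,U;α)| + log(2|α|) + 2, where h(X,U;α) = ((X−U)² − α²)/(2α) is the edge biquadratic of (Q1)_{δ=1}; in particular ∂L/∂α equals log|h| plus a function of α alone. -/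

import Mathlib

/-- Symmetric Lagrangian for (Q1)_{δ=1}. -/
noncomputable def Lag (X U α : ℝ) : ℝ :=
  (X - U + α) * Real.log |X - U + α| - (X - U - α) * Real.log |X - U - α|

lemma xlogabs (y : ℝ) (hy : y ≠ 0) :
    HasDerivAt (fun x : ℝ => x * Real.log |x|) (Real.log |y| + 1) y := by
  have h := (Real.hasDerivAt_mul_log hy)
  have : HasDerivAt (fun x : ℝ => x * Real.log x) (Real.log |y| + 1) y := by
    rw [Real.log_abs]; simpa using h
  refine this.congr_of_eventuallyEq ?_
  filter_upwards [] with x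
  rw [Real.log_abs]

/-- Symmetric Lagrangian of (Q1)_{δ=1} and its parameter derivative. -/
theorem stmt_17 (X U α : ℝ) (h1 : X - U + α ≠ 0) (h2 : X - U - α ≠ 0) :
    Lag X U α = Lag U X α ∧
    HasDerivAt (fun t => Lag t U α) (Real.log |(X - U + α) / (X - U - α)|) X ∧
    (α ≠ 0 → HasDerivAt (fun a => Lag X U a)
      (Real.log |((X - U)^2 - α^2) / (2*α)| + Real.log (2 * |α|) + 2) α) := by
  refine ⟨?_, ?_, ?_⟩
  · unfold Lag
    have e1 : U - X + α = -(X - U - α) := by ring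
    have e2 : U - X - α = -(X - U + α) := by ring
    rw [e1, e2, abs_neg, abs_neg]
    ring
  · have d1 : HasDerivAt (fun t : ℝ => (t - U + α) * Real.log |t - U + α|)
        (Real.log |X - U + α| + 1) X := by
      have := (xlogabs (X - U + α) h1).comp X
        (((hasDerivAt_id X).sub_const U).add_const α)
      simpa [Function.comp_def] using this
    have d2 : HasDerivAt (fun t : ℝ => (t - U - α) * Real.log |t - U - α|)
        (Real.log |X - U - α| + 1) X := by
      have := (xlogabs (X - U - α) h2).comp X
        (((hasDerivAt_id X).sub_const U).sub_const α)
      simpa [Function.comp_def] using this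
    have := d1.sub d2
    have heq : Real.log |X - U + α| + 1 - (Real.log |X - U - α| + 1)
        = Real.log |(X - U + α) / (X - U - α)| := by
      rw [abs_div, Real.log_div (abs_ne_zero.2 h1) (abs_ne_zero.2 h2)]
      ring
    rw [← heq]
    exact this
  · intro hα
    have d1 : HasDerivAt (fun a : ℝ => (X - U + a) * Real.log |X - U + a|)
        (Real.log |X - U + α| + 1) α := by
      have := (xlogabs (X - U + α) h1).comp α ((hasDerivAt_id α).const_add (X - U))
      simpa [Function.comp_def] using this
    have d2 : HasDerivAt (fun a : ℝ => (X - U - a) * Real.log |X - U - a|)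
        (-(Real.log |X - U - α| + 1)) α := by
      have := (xlogabs (X - U - α) h2).comp α ((hasDerivAt_id α).const_sub (X - U))
      simpa [Function.comp_def] using this
    have := d1.sub d2
    have hne : (X - U)^2 - α^2 ≠ 0 := by
      intro h
      have : (X - U + α) * (X - U - α) = 0 := by nlinarith [h]
      rcases mul_eq_zero.1 this with h | h
      exacts [h1 h, h2 h]
    have heq : Real.log |X - U + α| + 1 - -(Real.log |X - U - α| + 1)
        = Real.log |((X - U)^2 - α^2) / (2*α)| + Real.log (2 * |α|) + 2 := by
      have h2α : (2 : ℝ) * α ≠ 0 := by positivity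
      rw [abs_div, Real.log_div (abs_ne_zero.2 hne) (abs_ne_zero.2 h2α)]
      have : |((X - U)^2 - α^2)| = |X - U + α| * |X - U - α| := by
        rw [← abs_mul]; ring_nf
      rw [this, Real.log_mul (abs_ne_zero.2 h1) (abs_ne_zero.2 h2),
        show (2:ℝ) * |α| = |2 * α| by rw [abs_mul]; simp]
      ring
    rw [← heq]
    exact this
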